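/- arXiv:1302.5248 — 2 statements merged into one kernel-verified Lean document; each statement's English description precedes it below -/
import Mathlib

section
/- Let d = ξ(π) where ξ'(t) = sin²t/√(1+sin²t), ξ(0)=0. Define p(t) = sin³t − ξ(t)·cos t·√(1+sin²t). Then for all t ∈ [0,π), p(t)·ξ(t) < (2d − ξ(t))². -/
open Real

/-- The function ξ, antiderivative of sin²t/√(1+sin²t) vanishing at 0. -/
noncomputable def xi (t : ℝ) : ℝ := ∫ r in (0:ℝ)..t, Real.sin r ^ 2 / Real.sqrt (1 + Real.sin r ^ 2)

/-- p(t): the orthogonal distance from the origin to the tangent line of the elastica at E(t). -/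
noncomputable def p (t : ℝ) : ℝ := Real.sin t ^ 3 - xi t * Real.cos t * Real.sqrt (1 + Real.sin t ^ 2)

noncomputable def xi' (r : ℝ) : ℝ := Real.sin r ^ 2 / Real.sqrt (1 + Real.sin r ^ 2)

lemma sqrt_pos' (r : ℝ) : 0 < Real.sqrt (1 + Real.sin r ^ 2) := by
  apply Real.sqrt_pos.mpr; nlinarith [sq_nonneg (Real.sin r)]

lemma xi'_cont : Continuous xi' := by
  apply Continuous.div (by continuity) (by continuity)
  exact fun r => (sqrt_pos' r).ne'

lemma xi'_nonneg (r : ℝ) : 0 ≤ xi' r :=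
  div_nonneg (sq_nonneg _) (Real.sqrt_nonneg _)

lemma xi'_intable (a b : ℝ) : IntervalIntegrable xi' MeasureTheory.volume a b :=
  xi'_cont.intervalIntegrable a b

lemma xi_eq (t : ℝ) : xi t = ∫ r in (0:ℝ)..t, xi' r := rfl

lemma xi_sub (a b : ℝ) : xi b - xi a = ∫ r in a..b, xi' r := by
  rw [xi_eq, xi_eq]
  exact intervalIntegral.integral_interval_sub_left (xi'_intable 0 b) (xi'_intable 0 a)

lemma xi_mono {a b : ℝ} (hab : a ≤ b) : xi a ≤ xi b := by
  have h : 0 ≤ xi b - xi a := by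
    rw [xi_sub]
    exact intervalIntegral.integral_nonneg hab (fun r _ => xi'_nonneg r)
  linarith

lemma xi_zero : xi 0 = 0 := by simp [xi_eq]

lemma xi_symm (t : ℝ) : xi π = xi t + xi (π - t) := by
  have h1 : xi π - xi t = ∫ r in t..π, xi' r := xi_sub t π
  have h2 : xi (π - t) = ∫ r in (0:ℝ)..(π - t), xi' (π - r) := by
    rw [xi_eq]
    apply intervalIntegral.integral_congr
    intro r _
    simp [xi', Real.sin_pi_sub]
  rw [h2, intervalIntegral.integral_comp_sub_left xi' π] at *
  rw [h2]
  simp only [sub_sub_cancel, sub_zero] at *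
  linarith [h1]

/-- Key comparison: sin³ u < 4 ξ(u) for u ∈ (0, π]. -/
lemma key_lemma {u : ℝ} (hu0 : 0 < u) (huπ : u ≤ π) : Real.sin u ^ 3 < 4 * xi u := by
  have hderiv : ∀ x ∈ Set.uIcc (0:ℝ) u, HasDerivAt (fun y => Real.sin y ^ 3)
      (3 * Real.sin x ^ 2 * Real.cos x) x := by
    intro x _
    have := (Real.hasDerivAt_sin x).fun_pow 3
    simpa [mul_comm, mul_assoc, mul_left_comm] using this
  have hint : Real.sin u ^ 3 = ∫ r in (0:ℝ)..u, 3 * Real.sin r ^ 2 * Real.cos r := by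
    rw [intervalIntegral.integral_eq_sub_of_hasDerivAt hderiv
      (by apply Continuous.intervalIntegrable; continuity)]
    simp
  have hpos : 0 < ∫ r in (0:ℝ)..u, (4 * xi' r - 3 * Real.sin r ^ 2 * Real.cos r) := by
    apply intervalIntegral.intervalIntegral_pos_of_pos_on
    · exact ((continuous_const.mul xi'_cont).sub (by continuity)).intervalIntegrable 0 u
    · intro x hx
      have hs : 0 < Real.sin x := Real.sin_pos_of_pos_of_lt_pi hx.1 (lt_of_lt_of_le hx.2 huπ)
      have hD : 0 < Real.sqrt (1 + Real.sin x ^ 2) := sqrt_pos' x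
      have hkey : 3 * Real.cos x * Real.sqrt (1 + Real.sin x ^ 2) < 4 := by
        rcases le_or_gt (Real.cos x) 0 with hc | hc
        · nlinarith [Real.sqrt_nonneg (1 + Real.sin x ^ 2)]
        · have h1 : Real.cos x * Real.sqrt (1 + Real.sin x ^ 2)
              = Real.sqrt (Real.cos x ^ 2 * (1 + Real.sin x ^ 2)) := by
            rw [Real.sqrt_mul (sq_nonneg _), Real.sqrt_sq hc.le]
          have h2 : Real.cos x ^ 2 * (1 + Real.sin x ^ 2) ≤ 1 := by
            nlinarith [Real.sin_sq_add_cos_sq x, sq_nonneg (Real.sin x * Real.cos x),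
              sq_nonneg (Real.sin x)]
          have h3 : Real.sqrt (Real.cos x ^ 2 * (1 + Real.sin x ^ 2)) ≤ 1 :=
            Real.sqrt_le_one.mpr h2
          nlinarith [h1, h3]
      have : 3 * Real.sin x ^ 2 * Real.cos x < 4 * xi' x := by
        rw [xi', show (4:ℝ) * (Real.sin x ^ 2 / Real.sqrt (1 + Real.sin x ^ 2))
          = 4 * Real.sin x ^ 2 / Real.sqrt (1 + Real.sin x ^ 2) by ring, lt_div_iff₀ hD]
        nlinarith [mul_lt_mul_of_pos_left hkey (pow_pos hs 2)]
      linarith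
    · exact hu0
  have h4 : (∫ r in (0:ℝ)..u, (4 * xi' r - 3 * Real.sin r ^ 2 * Real.cos r))
      = 4 * xi u - Real.sin u ^ 3 := by
    rw [intervalIntegral.integral_sub (by apply Continuous.intervalIntegrable; exact continuous_const.mul xi'_cont)
      (by apply Continuous.intervalIntegrable; continuity),
      intervalIntegral.integral_const_mul, hint, xi_eq]
  linarith [hpos, h4.symm ▸ hpos]

/-- Lower bound: ξ(π) ≥ π/(2√2) > 1. -/
lemma xi_pi_lb : 1 < xi π := by
  have hmono : ∀ r, Real.sin r ^ 2 / Real.sqrt 2 ≤ xi' r := by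
    intro r
    apply div_le_div_of_nonneg_left (sq_nonneg _) (sqrt_pos' r)
    apply Real.sqrt_le_sqrt
    nlinarith [Real.sin_sq_le_one r]
  have hint : (∫ r in (0:ℝ)..π, Real.sin r ^ 2 / Real.sqrt 2) ≤ xi π := by
    rw [xi_eq]
    apply intervalIntegral.integral_mono_on Real.pi_pos.le
      (by apply Continuous.intervalIntegrable; continuity) (xi'_intable 0 π)
    intro r _
    exact hmono r
  have hval : (∫ r in (0:ℝ)..π, Real.sin r ^ 2 / Real.sqrt 2)
      = (π / 2) / Real.sqrt 2 := by
    rw [intervalIntegral.integral_div, integral_sin_sq]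
    simp [Real.sin_pi]
  have h2 : Real.sqrt 2 < 3 / 2 := by
    rw [show (3:ℝ)/2 = Real.sqrt ((3/2)^2) by rw [Real.sqrt_sq]; norm_num]
    apply Real.sqrt_lt_sqrt (by norm_num) (by norm_num)
  have hπ : 3 < π := by linarith [Real.pi_gt_three]
  have hs2 : 0 < Real.sqrt 2 := by positivity
  have : 1 < (π / 2) / Real.sqrt 2 := by
    rw [lt_div_iff₀ hs2]
    nlinarith
  linarith [hval ▸ hint]

theorem stmt_10 (t : ℝ) (ht : t ∈ Set.Ico 0 π) :
    p t * xi t < (2 * xi π - xi t) ^ 2 := by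
  obtain ⟨ht0, htπ⟩ := ht
  have hd1 : 1 < xi π := xi_pi_lb
  have hξ0 : 0 ≤ xi t := by simpa [xi_zero] using xi_mono ht0
  rcases le_or_gt t (π / 2) with hle | hgt
  · -- t ∈ [0, π/2]
    have hhalf : xi (π / 2) = xi π / 2 := by
      have := xi_symm (π / 2)
      rw [show π - π / 2 = π / 2 by ring] at this
      linarith
    have hξle : xi t ≤ xi π / 2 := hhalf ▸ xi_mono hle
    have hcos : 0 ≤ Real.cos t := Real.cos_nonneg_of_mem_Icc ⟨by linarith, hle⟩
    have hs1 : Real.sin t ≤ 1 := Real.sin_le_one t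
    have hs0 : 0 ≤ Real.sin t := Real.sin_nonneg_of_nonneg_of_le_pi ht0 htπ.le
    have hp1 : p t ≤ 1 := by
      unfold p
      nlinarith [mul_nonneg (mul_nonneg hξ0 hcos) (Real.sqrt_nonneg (1 + Real.sin t ^ 2))]
    have hmul : p t * xi t ≤ xi t := by nlinarith
    nlinarith [sq_nonneg (2 * xi π - xi t - 3 * xi π / 2)]
  · -- t ∈ (π/2, π)
    set u := π - t with hu
    have hu0 : 0 < u := by simp [hu]; linarith
    have hu2 : u ≤ π / 2 := by simp [hu]; linarith
    have hsym : xi t = xi π - xi u := by linarith [xi_symm t]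
    have hsin : Real.sin t = Real.sin u := by rw [hu, Real.sin_pi_sub]
    have hcos : Real.cos t = -Real.cos u := by rw [hu, Real.cos_pi_sub]; ring
    have hkey : Real.sin u ^ 3 < 4 * xi u := key_lemma hu0 (by linarith [Real.pi_pos])
    have hη0 : 0 ≤ xi u := by simpa [xi_zero] using xi_mono hu0.le
    have hηd : xi u ≤ xi π := xi_mono (by linarith [Real.pi_pos])
    have hcu : 0 ≤ Real.cos u := Real.cos_nonneg_of_mem_Icc ⟨by linarith, hu2⟩
    have hsu0 : 0 ≤ Real.sin u := Real.sin_nonneg_of_nonneg_of_le_pi hu0.le (by linarith [Real.pi_pos])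
    have hc1 : Real.cos u * Real.sqrt (1 + Real.sin u ^ 2) ≤ 1 := by
      have h1 : Real.cos u * Real.sqrt (1 + Real.sin u ^ 2)
          = Real.sqrt (Real.cos u ^ 2 * (1 + Real.sin u ^ 2)) := by
        rw [Real.sqrt_mul (sq_nonneg _), Real.sqrt_sq hcu]
      have h2 : Real.cos u ^ 2 * (1 + Real.sin u ^ 2) ≤ 1 := by
        nlinarith [Real.sin_sq_add_cos_sq u, sq_nonneg (Real.sin u * Real.cos u)]
      rw [h1]
      exact Real.sqrt_le_one.mpr h2
    have hpeq : p t = Real.sin u ^ 3 + (xi π - xi u) * (Real.cos u * Real.sqrt (1 + Real.sin u ^ 2)) := by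
      unfold p
      rw [hsin, hcos, hsym]
      ring
    have hdη : 0 ≤ xi π - xi u := by linarith
    have hple : p t ≤ Real.sin u ^ 3 + (xi π - xi u) := by
      rw [hpeq]
      nlinarith [mul_le_mul_of_nonneg_left hc1 hdη]
    have hmul : p t * xi t ≤ (Real.sin u ^ 3 + (xi π - xi u)) * (xi π - xi u) := by
      rw [hsym]
      exact mul_le_mul_of_nonneg_right hple hdη
    have hRHS : (2 * xi π - xi t) ^ 2 = (xi π + xi u) ^ 2 := by rw [hsym]; ring
    rw [hRHS]
    have hs3 : 0 ≤ Real.sin u ^ 3 := by positivity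
    nlinarith [mul_pos (by linarith : (0:ℝ) < xi π) (by linarith : 0 < 4 * xi u - Real.sin u ^ 3),
      mul_nonneg hs3 hη0]
end

section
/- For t ∈ (0,π], let θ(t) and ψ(t) denote, respectively, the positive angle between the chord [0, E(t)] and the tangent direction of E at E(t), and the angle between the chord and the tangent direction at 0 (i.e., ψ(t) = arg(E(t)) since E'(0) is horizontal). Then θ(π) = ψ(π) = π/2 and the one-sided derivatives at π satisfy −θ'(π) = ψ'(π) = 1/d, where d = ξ(π). -/
open Real

/-- The rectangular elastica E(t) = sin t + i ξ(t). -/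
noncomputable def E (t : ℝ) : ℂ := Real.sin t + xi t * Complex.I

/-- ψ(t): the angle between the chord [0, E(t)] and the (horizontal) tangent at 0. -/
noncomputable def psi (t : ℝ) : ℝ := Complex.arg (E t)

/-- The direction angle of the tangent of E at parameter t (the turning angle of E on [0,t]). -/
noncomputable def tangentAngle (t : ℝ) : ℝ := 2 * arccos (Real.cos t / Real.sqrt 2) - π / 2

/-- θ(t): the positive angle between the chord [0, E(t)] and the tangent direction at E(t). -/
noncomputable def theta (t : ℝ) : ℝ := tangentAngle t - psi t

lemma integrand_cont : Continuous fun r : ℝ => Real.sin r ^ 2 / Real.sqrt (1 + Real.sin r ^ 2) := by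
  apply Continuous.div (by continuity) (by continuity)
  intro x
  positivity

lemma xi_hasDerivAt (t : ℝ) :
    HasDerivAt xi (Real.sin t ^ 2 / Real.sqrt (1 + Real.sin t ^ 2)) t := by
  exact intervalIntegral.integral_hasDerivAt_right
    (integrand_cont.intervalIntegrable _ _)
    (integrand_cont.stronglyMeasurableAtFilter _ _)
    integrand_cont.continuousAt

lemma xi_pos : 0 < xi π := by
  apply intervalIntegral.intervalIntegral_pos_of_pos_on
    (integrand_cont.intervalIntegrable _ _)
  · intro x hx
    have h1 : 0 < Real.sin x := Real.sin_pos_of_pos_of_lt_pi hx.1 hx.2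
    positivity
  · exact Real.pi_pos

lemma arg_im_pos_eq (x y : ℝ) (hy : 0 < y) :
    Complex.arg (x + y * Complex.I) = π / 2 - Real.arctan (x / y) := by
  have hr : (0:ℝ) < y * Real.sqrt (1 + (x / y) ^ 2) := by positivity
  have hθ : π / 2 - Real.arctan (x / y) ∈ Set.Ioc (-π) π := by
    have h1 := Real.arctan_lt_pi_div_two (x / y)
    have h2 := Real.neg_pi_div_two_lt_arctan (x / y)
    constructor <;> [linarith [Real.pi_pos]; linarith [Real.pi_pos]]
  have key : (↑x + ↑y * Complex.I : ℂ) =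
      ↑(y * Real.sqrt (1 + (x / y) ^ 2)) *
        (Complex.cos ↑(π / 2 - Real.arctan (x / y)) +
          Complex.sin ↑(π / 2 - Real.arctan (x / y)) * Complex.I) := by
    rw [← Complex.ofReal_cos, ← Complex.ofReal_sin, Real.cos_pi_div_two_sub,
      Real.sin_pi_div_two_sub, Real.sin_arctan, Real.cos_arctan]
    have hs : (0:ℝ) < Real.sqrt (1 + (x / y) ^ 2) := by positivity
    apply Complex.ext <;> simp <;> field_simp
  rw [key]
  exact Complex.arg_mul_cos_add_sin_mul_I hr hθ

theorem stmt_16 :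
    theta π = π / 2 ∧ psi π = π / 2 ∧
    HasDerivWithinAt theta (-(1 / xi π)) (Set.Iic π) π ∧
    HasDerivWithinAt psi (1 / xi π) (Set.Iic π) π := by
  have hxp := xi_pos
  -- value of psi at π
  have hpsi : psi π = π / 2 := by
    rw [psi, Complex.arg_eq_pi_div_two_iff]
    simp [E, hxp]
  -- value of tangentAngle at π
  have hs2 : Real.sqrt 2 * Real.sqrt 2 = 2 := Real.mul_self_sqrt (by norm_num)
  have hs2pos : (0:ℝ) < Real.sqrt 2 := by positivity
  have hval : Real.cos π / Real.sqrt 2 = -(Real.sqrt 2 / 2) := by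
    rw [Real.cos_pi]
    field_simp
    nlinarith [hs2]
  have harc : Real.arccos (Real.cos π / Real.sqrt 2) = 3 * π / 4 := by
    rw [hval, Real.arccos_neg, ← Real.cos_pi_div_four,
      Real.arccos_cos (by positivity) (by linarith [Real.pi_pos])]
    ring
  have hta : tangentAngle π = π := by
    rw [tangentAngle, harc]; ring
  have htheta : theta π = π / 2 := by
    rw [theta, hta, hpsi]; ring
  -- derivative of psi at π (two-sided)
  have hg : HasDerivAt (fun t => π / 2 - Real.arctan (Real.sin t / xi t)) (1 / xi π) π := by
    have hinner : HasDerivAt (fun t => Real.sin t / xi t) (-(1 / xi π)) π := by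
      have := (Real.hasDerivAt_sin π).div (xi_hasDerivAt π) (ne_of_gt hxp)
      refine this.congr_deriv ?_
      rw [Real.sin_pi, Real.cos_pi]
      field_simp
      ring
    have harct := (Real.hasDerivAt_arctan (Real.sin π / xi π)).comp π hinner
    have h0 : Real.sin π / xi π = 0 := by rw [Real.sin_pi]; simp
    rw [h0] at harct
    have harct' : HasDerivAt (fun t => Real.arctan (Real.sin t / xi t))
        (1 / (1 + 0 ^ 2) * -(1 / xi π)) π := harct
    have hsub : HasDerivAt (fun t => π / 2 - Real.arctan (Real.sin t / xi t))
        (0 - 1 / (1 + 0 ^ 2) * -(1 / xi π)) π := (hasDerivAt_const π (π/2)).sub harct'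
    convert hsub using 1
    norm_num
  have hpsi_ev : psi =ᶠ[nhds π] fun t => π / 2 - Real.arctan (Real.sin t / xi t) := by
    have hc : ContinuousAt xi π := (xi_hasDerivAt π).continuousAt
    have hev : ∀ᶠ t in nhds π, 0 < xi t := hc.eventually (eventually_gt_nhds hxp)
    filter_upwards [hev] with t ht
    rw [psi, E, arg_im_pos_eq _ _ ht]
  have hpsi_deriv : HasDerivAt psi (1 / xi π) π := hg.congr_of_eventuallyEq hpsi_ev
  -- derivative of tangentAngle at π
  have hu : HasDerivAt (fun t => Real.cos t / Real.sqrt 2) (-Real.sin π / Real.sqrt 2) π :=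
    (Real.hasDerivAt_cos π).div_const _
  have hne1 : Real.cos π / Real.sqrt 2 ≠ -1 := by
    rw [hval]
    intro h
    nlinarith [hs2, hs2pos]
  have hne2 : Real.cos π / Real.sqrt 2 ≠ 1 := by
    rw [hval]
    nlinarith [hs2, hs2pos]
  have harccos := (Real.hasDerivAt_arccos hne1 hne2).comp π hu
  have hta_deriv : HasDerivAt tangentAngle 0 π := by
    have : HasDerivAt tangentAngle
        (2 * (-(1 / Real.sqrt (1 - (Real.cos π / Real.sqrt 2) ^ 2)) * (-Real.sin π / Real.sqrt 2)) - 0) π :=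
      ((harccos.const_mul 2).sub (hasDerivAt_const π (π/2)))
    convert this using 1
    rw [Real.sin_pi]
    ring
  have htheta_deriv : HasDerivAt theta (-(1 / xi π)) π := by
    have := hta_deriv.sub hpsi_deriv
    refine this.congr_deriv ?_
    ring
  exact ⟨htheta, hpsi, htheta_deriv.hasDerivWithinAt, hpsi_deriv.hasDerivWithinAt⟩
end
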